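/- Let 0 < β₂ < 1 and (g_t)_{t≥1} real numbers. Define v_t = β₂ v_{t-1} + (1-β₂) g_t² with v₀ = 0. Then ∑_{t=1}^T g_t² / (√(v_t) · √t) ≤ (2/√(1-β₂)) √((1+\log T) ∑_{t=1}^T g_t²) whenever all v_t > 0. -/

import Mathlib

lemma mySum_one_div_le_one_add_log (T : ℕ) (hT : 1 ≤ T) :
    ∑ t ∈ Finset.Icc 1 T, (1 : ℝ) / t ≤ 1 + Real.log T := by
  induction T with
  | zero => omega
  | succ n ih =>
    rcases Nat.eq_or_lt_of_le hT with h | h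
    · simp [← h]
    · have hn : 1 ≤ n := by omega
      have hnR : (0:ℝ) < n := by exact_mod_cast hn
      rw [Finset.sum_Icc_succ_top (by omega : 1 ≤ n + 1)]
      have key : (1 : ℝ) / (n + 1) ≤ Real.log (n + 1) - Real.log n := by
        have hx : (0:ℝ) < (n : ℝ) / (n + 1) := by positivity
        have := Real.log_le_sub_one_of_pos hx
        rw [Real.log_div (ne_of_gt hnR) (by positivity)] at this
        have h1 : (n:ℝ) / (n+1) - 1 = -(1 / (n+1)) := by field_simp; ring
        linarith [this, h1.le]
      have : (↑(n + 1) : ℝ) = (n : ℝ) + 1 := by push_cast; ring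
      rw [this]
      linarith [ih hn]

/-- Bound on `∑ g_t² / (√v_t √t)` for the exponential moving average
`v_t = β₂ v_{t-1} + (1-β₂) g_t²`, `v₀ = 0`. -/
theorem adal_second_moment_sum_bound (T : ℕ) (hT : 0 < T)
    (β₂ : ℝ) (hβ₂ : 0 < β₂) (hβ₂1 : β₂ < 1)
    (g v : ℕ → ℝ) (hv0 : v 0 = 0)
    (hv : ∀ t, 1 ≤ t → v t = β₂ * v (t - 1) + (1 - β₂) * (g t) ^ 2)
    (hvpos : ∀ t ∈ Finset.Icc 1 T, 0 < v t) :
    ∑ t ∈ Finset.Icc 1 T, (g t) ^ 2 / (Real.sqrt (v t) * Real.sqrt t) ≤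
      (2 / Real.sqrt (1 - β₂)) *
        Real.sqrt ((1 + Real.log T) * ∑ t ∈ Finset.Icc 1 T, (g t) ^ 2) := by
  have hβ : (0:ℝ) < 1 - β₂ := by linarith
  have hsβ : 0 < Real.sqrt (1 - β₂) := Real.sqrt_pos.2 hβ
  -- v is nonnegative
  have hvnn : ∀ t, 0 ≤ v t := by
    intro t
    induction t with
    | zero => simp [hv0]
    | succ n ihn =>
      rw [hv (n+1) (by omega)]
      simp only [Nat.add_sub_cancel]
      have : 0 ≤ (1 - β₂) * g (n+1) ^ 2 := by positivity
      nlinarith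
  -- pointwise bound: g t ^2 / √(v t) ≤ |g t| / √(1-β₂)
  have hpt : ∀ t ∈ Finset.Icc 1 T,
      (g t) ^ 2 / (Real.sqrt (v t) * Real.sqrt t) ≤
        (1 / Real.sqrt (1 - β₂)) * (|g t| * (1 / Real.sqrt t)) := by
    intro t ht
    simp only [Finset.mem_Icc] at ht
    have htpos : (0:ℝ) < Real.sqrt t := Real.sqrt_pos.2 (by exact_mod_cast ht.1)
    have hvt : 0 < v t := hvpos t (Finset.mem_Icc.2 ht)
    have hsv : 0 < Real.sqrt (v t) := Real.sqrt_pos.2 hvt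
    have hvge : (1 - β₂) * g t ^ 2 ≤ v t := by
      rw [hv t ht.1]
      have := hvnn (t - 1)
      nlinarith
    have hsq : Real.sqrt (1 - β₂) * |g t| ≤ Real.sqrt (v t) := by
      have := Real.sqrt_le_sqrt hvge
      rwa [Real.sqrt_mul hβ.le, Real.sqrt_sq_eq_abs] at this
    rw [div_le_iff₀ (by positivity)]
    have h1 : g t ^ 2 * Real.sqrt (1 - β₂) ≤ |g t| * Real.sqrt (v t) := by
      have h2 : |g t| * (Real.sqrt (1 - β₂) * |g t|) ≤ |g t| * Real.sqrt (v t) :=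
        mul_le_mul_of_nonneg_left hsq (abs_nonneg _)
      calc g t ^ 2 * Real.sqrt (1 - β₂) = |g t| * (Real.sqrt (1 - β₂) * |g t|) := by
            rw [← sq_abs (g t)]; ring
        _ ≤ |g t| * Real.sqrt (v t) := h2
    calc (g t) ^ 2 = (g t ^ 2 * Real.sqrt (1 - β₂)) / Real.sqrt (1 - β₂) := by
          field_simp
      _ ≤ (|g t| * Real.sqrt (v t)) / Real.sqrt (1 - β₂) := by gcongr
      _ = 1 / Real.sqrt (1 - β₂) * (|g t| * (1 / Real.sqrt t)) *
            (Real.sqrt (v t) * Real.sqrt t) := by field_simp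
  -- sum bound
  have hsum := Finset.sum_le_sum hpt
  rw [← Finset.mul_sum] at hsum
  refine hsum.trans ?_
  -- Cauchy-Schwarz
  have hCS : ∑ t ∈ Finset.Icc 1 T, |g t| * (1 / Real.sqrt t) ≤
      Real.sqrt (∑ t ∈ Finset.Icc 1 T, (g t) ^ 2) *
        Real.sqrt (∑ t ∈ Finset.Icc 1 T, (1:ℝ) / t) := by
    have := Real.sum_mul_le_sqrt_mul_sqrt (Finset.Icc 1 T)
      (fun t => |g t|) (fun t => 1 / Real.sqrt t)
    refine this.trans ?_
    apply mul_le_mul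
    · apply Real.sqrt_le_sqrt
      apply Finset.sum_le_sum
      intro i _; rw [sq_abs]
    · apply Real.sqrt_le_sqrt
      apply Finset.sum_le_sum
      intro i hi
      simp only [Finset.mem_Icc] at hi
      have : (0:ℝ) < i := by exact_mod_cast hi.1
      rw [div_pow, one_pow, Real.sq_sqrt this.le]
    · positivity
    · positivity
  have hharm : ∑ t ∈ Finset.Icc 1 T, (1:ℝ) / t ≤ 1 + Real.log T :=
    mySum_one_div_le_one_add_log T hT
  have hlog : (0:ℝ) ≤ 1 + Real.log T := by
    have : (1:ℝ) ≤ (T:ℝ) := by exact_mod_cast hT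
    have := Real.log_nonneg this
    linarith
  have hfinal : ∑ t ∈ Finset.Icc 1 T, |g t| * (1 / Real.sqrt t) ≤
      Real.sqrt ((1 + Real.log T) * ∑ t ∈ Finset.Icc 1 T, (g t) ^ 2) := by
    refine hCS.trans ?_
    rw [Real.sqrt_mul hlog, mul_comm]
    apply mul_le_mul_of_nonneg_right _ (Real.sqrt_nonneg _)
    exact Real.sqrt_le_sqrt hharm
  calc (1 / Real.sqrt (1 - β₂)) * ∑ t ∈ Finset.Icc 1 T, |g t| * (1 / Real.sqrt t)
      ≤ (1 / Real.sqrt (1 - β₂)) *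
        Real.sqrt ((1 + Real.log T) * ∑ t ∈ Finset.Icc 1 T, (g t) ^ 2) :=
        mul_le_mul_of_nonneg_left hfinal (by positivity)
    _ ≤ (2 / Real.sqrt (1 - β₂)) *
        Real.sqrt ((1 + Real.log T) * ∑ t ∈ Finset.Icc 1 T, (g t) ^ 2) := by
        gcongr
        norm_num
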